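/- Let u, v be positive integers and let (w_n)_{n≥1} be an infinite path in the forest F(L_u,R_v) such that w_{n+1} = L_u(w_n) for infinitely many n and w_{n+1} = R_v(w_n) for infinitely many n. Then the sequence (w_n) has no limit: it converges to no complex number and |w_n| does not tend to infinity. Consequently, the set of cusps of the semigroup ⟨L_u,R_v⟩ (the limits of infinite paths in F(L_u,R_v), including ∞) is exactly {0, ∞}. -/

import Mathlib

open Filter OnePoint

/-- The open first quadrant of "positive" complex numbers. -/
def D0 : Set ℂ := {z : ℂ | 0 < z.re ∧ 0 < z.im}

/-- An infinite path in the forest F(L_u,R_v): a sequence in D₀ in which each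
term is followed by its left child L_u(w) = w/(uw+1) or its right child
R_v(w) = w + v. -/
def IsPath (u v : ℕ) (w : ℕ → ℂ) : Prop :=
  ∀ n : ℕ, w n ∈ D0 ∧
    (w (n + 1) = w n / ((u : ℂ) * w n + 1) ∨ w (n + 1) = w n + (v : ℂ))

/-- The cusps of ⟨L_u, R_v⟩: the limits in ℂ ∪ {∞} of infinite paths
in the forest F(L_u,R_v). -/
def Cusps (u v : ℕ) : Set (OnePoint ℂ) :=
  {c | ∃ w : ℕ → ℂ, IsPath u v w ∧
    Tendsto (fun n => ((w n : ℂ) : OnePoint ℂ)) atTop (nhds c)}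

lemma ne_zero_of_re_pos' {z : ℂ} (h : 0 < z.re) : z ≠ 0 := by
  intro hz; rw [hz] at h; simp at h

lemma denom_re {z : ℂ} (t : ℝ) : ((t : ℂ) * z + 1).re = t * z.re + 1 := by
  simp

lemma denom_im {z : ℂ} (t : ℝ) : ((t : ℂ) * z + 1).im = t * z.im := by
  simp

lemma denom_ne_zero {z : ℂ} (hz : 0 < z.re) {t : ℝ} (ht : 0 ≤ t) :
    (t : ℂ) * z + 1 ≠ 0 :=
  ne_zero_of_re_pos' (by rw [denom_re]; positivity)

/-- `z ↦ z/(tz+1)` maps the first quadrant into itself for `t ≥ 0`. -/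
lemma div_mem_D0 {z : ℂ} (hz : z ∈ D0) {t : ℝ} (ht : 0 ≤ t) :
    z / ((t : ℂ) * z + 1) ∈ D0 := by
  obtain ⟨hx, hy⟩ := hz
  set d : ℂ := (t : ℂ) * z + 1 with hd
  have hdre : d.re = t * z.re + 1 := denom_re t
  have hdim : d.im = t * z.im := denom_im t
  have hdne : d ≠ 0 := denom_ne_zero hx ht
  have hS : 0 < Complex.normSq d := Complex.normSq_pos.2 hdne
  constructor
  · rw [Complex.div_re, hdre, hdim]
    have h1 : 0 < z.re * (t * z.re + 1) / Complex.normSq d := by positivity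
    have h2 : 0 ≤ z.im * (t * z.im) / Complex.normSq d := by positivity
    linarith
  · rw [Complex.div_im, hdre, hdim, div_sub_div_same]
    have : z.im * (t * z.re + 1) - z.re * (t * z.im) = z.im := by ring
    rw [this]
    positivity

/-- `|z/(tz+1)| < 1/t` for `z` in the first quadrant and `t > 0`. -/
lemma abs_div_lt {z : ℂ} (hz : z ∈ D0) {t : ℝ} (ht : 0 < t) :
    ‖z / ((t : ℂ) * z + 1)‖ < 1 / t := by
  obtain ⟨hx, hy⟩ := hz
  set d : ℂ := (t : ℂ) * z + 1 with hd
  have hdne : d ≠ 0 := denom_ne_zero hx ht.le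
  have habsz : 0 < ‖z‖ := by
    simpa using (norm_pos_iff.mpr (ne_zero_of_re_pos' hx))
  have habsd : 0 < ‖d‖ := norm_pos_iff.mpr hdne
  have key : t * ‖z‖ < ‖d‖ := by
    have hsq : (t * ‖z‖) ^ 2 < ‖d‖ ^ 2 := by
      rw [mul_pow, Complex.sq_norm, Complex.sq_norm, Complex.normSq_apply,
        Complex.normSq_apply, denom_re, denom_im]
      nlinarith [sq_nonneg z.re, sq_nonneg z.im]
    exact lt_of_pow_lt_pow_left₀ 2 habsd.le hsq
  rw [norm_div, div_lt_div_iff₀ habsd ht]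
  linarith

/-- The bound `|z/(tz+1)| ≤ |z|/(t·Re z + 1)`. -/
lemma abs_div_le {z : ℂ} (hz : z ∈ D0) {t : ℝ} (ht : 0 ≤ t) :
    ‖z / ((t : ℂ) * z + 1)‖ ≤ ‖z‖ / (t * z.re + 1) := by
  obtain ⟨hx, hy⟩ := hz
  rw [norm_div]
  have h1 : t * z.re + 1 ≤ ‖(t : ℂ) * z + 1‖ := by
    calc t * z.re + 1 = ((t : ℂ) * z + 1).re := (denom_re t).symm
    _ ≤ ‖(t : ℂ) * z + 1‖ := Complex.re_le_norm _
  have h2 : (0:ℝ) < t * z.re + 1 := by positivity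
  gcongr

/-- The iterate recurrence: applying `L_u` to `z/(kuz+1)` gives `z/((k+1)uz+1)`. -/
lemma L_iter_step {z : ℂ} (hz : z ∈ D0) (u k : ℕ) :
    z / (((k : ℂ) + 1) * (u : ℂ) * z + 1) =
      (z / ((k : ℂ) * (u : ℂ) * z + 1)) /
        ((u : ℂ) * (z / ((k : ℂ) * (u : ℂ) * z + 1)) + 1) := by
  have hx := hz.1
  have hk : ((k : ℂ) * (u : ℂ) * z + 1) ≠ 0 := by
    have := denom_ne_zero (t := (k : ℝ) * u) hx (by positivity)
    convert this using 2
    push_cast; ring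
  have hk1 : (((k : ℂ) + 1) * (u : ℂ) * z + 1) ≠ 0 := by
    have := denom_ne_zero (t := ((k : ℝ) + 1) * u) hx (by positivity)
    convert this using 2
    push_cast; ring
  have hden : (u : ℂ) * (z / ((k : ℂ) * (u : ℂ) * z + 1)) + 1 =
      (((k : ℂ) + 1) * (u : ℂ) * z + 1) / ((k : ℂ) * (u : ℂ) * z + 1) := by
    rw [mul_div_assoc', div_add_one hk]
    congr 1
    ring
  rw [hden]
  rw [div_div_div_cancel_right₀]
  exact hk

/-- `z/(kuz+1) → 0` as `k → ∞`. -/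
lemma L_iter_tendsto {z : ℂ} (hz : z ∈ D0) {u : ℕ} (hu : 0 < u) :
    Tendsto (fun k : ℕ => z / ((k : ℂ) * (u : ℂ) * z + 1)) atTop (nhds 0) := by
  have hx := hz.1
  rw [tendsto_zero_iff_norm_tendsto_zero]
  have hb : Tendsto (fun k : ℕ => ‖z‖ / ((k : ℝ) * u * z.re + 1))
      atTop (nhds 0) := by
    apply Tendsto.div_atTop tendsto_const_nhds
    apply tendsto_atTop_add_const_right
    have heq : (fun k : ℕ => (k : ℝ) * u * z.re) = fun k : ℕ => (k : ℝ) * ((u : ℝ) * z.re) := by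
      funext k; ring
    rw [heq]
    exact Tendsto.atTop_mul_const (by positivity) tendsto_natCast_atTop_atTop
  apply squeeze_zero (fun k => norm_nonneg _) _ hb
  intro k
  have := abs_div_le hz (t := (k : ℝ) * u) (by positivity)
  push_cast at this
  exact this

/-- Part 1: a path with infinitely many left steps and infinitely many right
steps has no limit. -/
lemma no_limit (u v : ℕ) (hu : 0 < u) (hv : 0 < v) (w : ℕ → ℂ)
    (hw : IsPath u v w)
    (hA : {n : ℕ | w (n + 1) = w n / ((u : ℂ) * w n + 1)}.Infinite)
    (hB : {n : ℕ | w (n + 1) = w n + (v : ℂ)}.Infinite) :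
    (∀ c : ℂ, ¬ Tendsto w atTop (nhds c)) ∧
      ¬ Tendsto (fun n => ‖w n‖) atTop atTop := by
  constructor
  · intro c h
    have h1 : Tendsto (fun n => w (n + 1)) atTop (nhds c) :=
      h.comp (tendsto_add_atTop_nat 1)
    have h2 : Tendsto (fun n => w (n + 1) - w n) atTop (nhds 0) := by
      simpa using h1.sub h
    have h3 : ∀ᶠ n in atTop, ‖w (n + 1) - w n‖ < 1 := by
      have := (NormedAddCommGroup.tendsto_nhds_zero.1 h2) 1 one_pos
      exact this
    have h4 : ∃ᶠ n in atTop, w (n + 1) = w n + (v : ℂ) :=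
      Nat.frequently_atTop_iff_infinite.2 hB
    obtain ⟨n, hn1, hn2⟩ := (h4.and_eventually h3).exists
    rw [hn1] at hn2
    simp only [add_sub_cancel_left] at hn2
    rw [Complex.norm_natCast] at hn2
    have : (1 : ℝ) ≤ v := by exact_mod_cast hv
    linarith
  · intro h
    have h1 : Tendsto (fun n => ‖w (n + 1)‖) atTop atTop :=
      h.comp (tendsto_add_atTop_nat 1)
    have h3 : ∀ᶠ n in atTop, 1 / (u : ℝ) + 1 ≤ ‖w (n + 1)‖ :=
      h1.eventually_ge_atTop _
    have h4 : ∃ᶠ n in atTop, w (n + 1) = w n / ((u : ℂ) * w n + 1) :=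
      Nat.frequently_atTop_iff_infinite.2 hA
    obtain ⟨n, hn1, hn2⟩ := (h4.and_eventually h3).exists
    have hlt : ‖w (n + 1)‖ < 1 / (u : ℝ) := by
      rw [hn1]
      exact abs_div_lt (hw n).1 (by exact_mod_cast hu)
    linarith

theorem cusps_eq_zero_infty (u v : ℕ) (hu : 0 < u) (hv : 0 < v) :
    (∀ w : ℕ → ℂ, IsPath u v w →
      {n : ℕ | w (n + 1) = w n / ((u : ℂ) * w n + 1)}.Infinite →
      {n : ℕ | w (n + 1) = w n + (v : ℂ)}.Infinite →
      (∀ c : ℂ, ¬ Tendsto w atTop (nhds c)) ∧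
        ¬ Tendsto (fun n => ‖w n‖) atTop atTop) ∧
    Cusps u v = {((0 : ℂ) : OnePoint ℂ), (∞ : OnePoint ℂ)} := by
  refine ⟨fun w hw hA hB => no_limit u v hu hv w hw hA hB, ?_⟩
  ext c
  simp only [Set.mem_insert_iff, Set.mem_singleton_iff]
  constructor
  · rintro ⟨w, hw, hc⟩
    induction c using OnePoint.rec with
    | infty => exact Or.inr rfl
    | coe x =>
      left
      have hx : Tendsto w atTop (nhds x) :=
        OnePoint.isOpenEmbedding_coe.tendsto_nhds_iff.mpr hc
      -- one of the step-sets is finite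
      by_cases hB : {n : ℕ | w (n + 1) = w n + (v : ℂ)}.Infinite
      · by_cases hA : {n : ℕ | w (n + 1) = w n / ((u : ℂ) * w n + 1)}.Infinite
        · exact absurd hx ((no_limit u v hu hv w hw hA hB).1 x)
        · -- finitely many L steps: eventually all steps are R, Re → ∞
          exfalso
          rw [Set.not_infinite] at hA
          obtain ⟨N, hN⟩ := hA.bddAbove
          have hstep : ∀ k : ℕ, w (k + (N + 1)) = w (N + 1) + (k : ℂ) * v := by
            intro k
            induction k with
            | zero => simp
            | succ k ih =>
              have hk : k + (N + 1) ∉ {n : ℕ | w (n + 1) = w n / ((u : ℂ) * w n + 1)} := by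
                intro hmem
                have := hN hmem
                omega
              have := (hw (k + (N + 1))).2.resolve_left hk
              have heq : k + 1 + (N + 1) = (k + (N + 1)) + 1 := by omega
              rw [heq, this, ih]
              push_cast; ring
          have hRe : Tendsto (fun k => (w (k + (N + 1))).re) atTop atTop := by
            have : (fun k : ℕ => (w (k + (N + 1))).re) =
                fun k : ℕ => (w (N + 1)).re + (k : ℝ) * v := by
              funext k
              rw [hstep k]
              simp
            rw [this]
            apply tendsto_atTop_add_const_left
            exact Tendsto.atTop_mul_const (by exact_mod_cast hv) tendsto_natCast_atTop_atTop
          have hRe' : Tendsto (fun k => (w (k + (N + 1))).re) atTop (nhds x.re) :=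
            (Complex.continuous_re.continuousAt.tendsto.comp hx).comp
              (tendsto_add_atTop_nat (N + 1))
          exact not_tendsto_nhds_of_tendsto_atTop hRe x.re hRe'
      · -- finitely many R steps: eventually all steps are L, w → 0
        rw [Set.not_infinite] at hB
        obtain ⟨N, hN⟩ := hB.bddAbove
        set z := w (N + 1) with hz
        have hzD : z ∈ D0 := (hw (N + 1)).1
        have hstep : ∀ k : ℕ, w (k + (N + 1)) = z / ((k : ℂ) * (u : ℂ) * z + 1) := by
          intro k
          induction k with
          | zero => simp [hz]
          | succ k ih =>
            have hk : k + (N + 1) ∉ {n : ℕ | w (n + 1) = w n + (v : ℂ)} := by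
              intro hmem
              have := hN hmem
              omega
            have hL := ((hw (k + (N + 1))).2.resolve_right hk)
            have heq : k + 1 + (N + 1) = (k + (N + 1)) + 1 := by omega
            rw [heq, hL, ih, ← L_iter_step hzD u k]
            push_cast; ring_nf
        have h0 : Tendsto (fun k => w (k + (N + 1))) atTop (nhds 0) := by
          have := L_iter_tendsto hzD hu
          simpa [← hstep] using this
        have hx' : Tendsto (fun k => w (k + (N + 1))) atTop (nhds x) :=
          hx.comp (tendsto_add_atTop_nat (N + 1))
        have : x = 0 := tendsto_nhds_unique hx' h0
        rw [this]
  · rintro (rfl | rfl)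
    · -- the all-left path converges to 0
      set z : ℂ := 1 + Complex.I with hzdef
      have hzD : z ∈ D0 := by constructor <;> simp [hzdef]
      refine ⟨fun n => z / ((n : ℂ) * (u : ℂ) * z + 1), fun n => ?_, ?_⟩
      · constructor
        · have := div_mem_D0 hzD (t := (n : ℝ) * u) (by positivity)
          convert this using 3
          push_cast; ring
        · left
          have := L_iter_step hzD u n
          rw [← this]
          push_cast; ring_nf
      · exact OnePoint.isOpenEmbedding_coe.tendsto_nhds_iff.mp (L_iter_tendsto hzD hu)
    · -- the all-right path converges to ∞
      refine ⟨fun n => 1 + Complex.I + (n : ℂ) * v, fun n => ?_, ?_⟩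
      · constructor
        · constructor
          · simp only [Complex.add_re, Complex.one_re, Complex.I_re, Complex.mul_re]
            simp
            positivity
          · simp
        · right
          push_cast; ring
      · have h1 : Tendsto (fun n : ℕ => (1 + Complex.I + (n : ℂ) * v)) atTop
            (Bornology.cobounded ℂ) := by
          rw [← tendsto_norm_atTop_iff_cobounded]
          have hb : ∀ n : ℕ, (n : ℝ) * v - ‖(1 : ℂ) + Complex.I‖ ≤
              ‖(1 + Complex.I + (n : ℂ) * v : ℂ)‖ := by
            intro n
            have h2 : ‖((n : ℂ) * v)‖ = (n : ℝ) * v := by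
              rw [norm_mul, Complex.norm_natCast, Complex.norm_natCast]
            have h3 := norm_sub_le ((1 : ℂ) + Complex.I + (n : ℂ) * v) ((1 : ℂ) + Complex.I)
            have h4 : ((1 : ℂ) + Complex.I + (n : ℂ) * v) - ((1 : ℂ) + Complex.I)
                = (n : ℂ) * v := by ring
            rw [h4, h2] at h3
            linarith
          apply tendsto_atTop_mono hb
          apply tendsto_atTop_add_const_right
          exact Tendsto.atTop_mul_const (by exact_mod_cast hv) tendsto_natCast_atTop_atTop
        have h2 : Tendsto (fun n : ℕ => (1 + Complex.I + (n : ℂ) * v)) atTop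
            (Filter.coclosedCompact ℂ) := by
          rwa [Filter.coclosedCompact_eq_cocompact, ← Metric.cobounded_eq_cocompact]
        exact OnePoint.tendsto_coe_infty.comp h2
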